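/- In the Euclidean plane, let (x̄, ȳ, ȳ') be a triangle with ‖x̄ - ȳ‖ = ‖x̄ - ȳ'‖ = d > 0, ȳ ≠ ȳ', and ‖ȳ - ȳ'‖ ≤ d. Then the circumradius min_{z} max{‖z-x̄‖, ‖z-ȳ‖, ‖z-ȳ'‖} is strictly greater than d/2. -/
import Mathlib


set_option maxHeartbeats 1000000 in
/-- In the Euclidean plane, an isosceles triangle with two equal legs of length `d`,
distinct base vertices, and base at most `d` has circumradius strictly greater
than `d / 2`. -/
theorem euclidean_isosceles_circumradius_gt {d : ℝ} (hd : 0 < d)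
    (x y y' : EuclideanSpace ℝ (Fin 2))
    (hxy : ‖x - y‖ = d) (hxy' : ‖x - y'‖ = d) (hne : y ≠ y') (hyy' : ‖y - y'‖ ≤ d) :
    d / 2 < ⨅ z : EuclideanSpace ℝ (Fin 2), max (max ‖z - x‖ ‖z - y‖) ‖z - y'‖ := by
  set m : EuclideanSpace ℝ (Fin 2) := (1/2 : ℝ) • (y + y') with hm
  set a : ℝ := ‖y - y'‖ / 2 with ha_def
  have ha_pos : 0 < a := by
    have := norm_sub_pos_iff.mpr hne
    simp only [ha_def]; linarith
  have hmy : ‖m - y‖ = a := by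
    have : m - y = (1/2 : ℝ) • (y' - y) := by
      rw [hm]; module
    rw [this, norm_smul, norm_sub_rev]
    simp [ha_def, abs_of_nonneg]
    ring
  have para : ∀ z : EuclideanSpace ℝ (Fin 2),
      ‖z - y‖^2 + ‖z - y'‖^2 = 2 * ‖z - m‖^2 + 2 * a^2 := by
    intro z
    have h1 : (z - m) + (m - y) = z - y := by abel
    have h2 : (z - m) - (m - y) = z - y' := by rw [hm]; module
    have := parallelogram_law_with_norm ℝ (z - m) (m - y)
    rw [h1, h2, hmy] at this
    nlinarith [this]
  set h : ℝ := ‖x - m‖ with hh_def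
  have hkey : h^2 + a^2 = d^2 := by
    have := para x
    rw [hxy, hxy'] at this
    nlinarith [this]
  clear_value a
  have ha_le : a ≤ d / 2 := by simp only [ha_def]; linarith
  have hh_nonneg : 0 ≤ h := norm_nonneg _
  have hh_pos : 0 < h := by nlinarith
  have hh_lt : h < d := by nlinarith
  clear_value h
  have hbound : ∀ z : EuclideanSpace ℝ (Fin 2),
      d^2 / (2*h) ≤ max (max ‖z - x‖ ‖z - y‖) ‖z - y'‖ := by
    intro z
    set t := max (max ‖z - x‖ ‖z - y‖) ‖z - y'‖ with ht_def
    have h1 : ‖z - x‖ ≤ t := le_trans (le_max_left _ _) (le_max_left _ _)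
    have h2 : ‖z - y‖ ≤ t := le_trans (le_max_right _ _) (le_max_left _ _)
    have h3 : ‖z - y'‖ ≤ t := le_max_right _ _
    have ht0 : 0 ≤ t := le_trans (norm_nonneg _) h1
    set s := ‖z - m‖ with hs_def
    have hs0 : 0 ≤ s := norm_nonneg _
    have htri : h ≤ ‖z - x‖ + s := by
      calc h = ‖x - m‖ := hh_def
        _ ≤ ‖x - z‖ + ‖z - m‖ := norm_sub_le_norm_sub_add_norm_sub _ _ _
        _ = ‖z - x‖ + s := by rw [norm_sub_rev]
    have hts : h ≤ t + s := le_trans htri (by linarith)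
    have hpar : t^2 ≥ s^2 + a^2 := by
      have hp := para z
      rw [← hs_def] at hp
      have hy2 : ‖z - y‖^2 ≤ t^2 := pow_le_pow_left₀ (norm_nonneg _) h2 2
      have hy2' : ‖z - y'‖^2 ≤ t^2 := pow_le_pow_left₀ (norm_nonneg _) h3 2
      linarith
    clear_value t s
    have hmain : h^2 + a^2 ≤ 2 * h * t := by
      rcases le_or_gt h t with hc | hc
      · nlinarith
      · have hst : (h - t)^2 ≤ s^2 := by nlinarith
        nlinarith
    rw [div_le_iff₀ (by linarith)]
    nlinarith
  have hinf : d^2 / (2*h) ≤ ⨅ z : EuclideanSpace ℝ (Fin 2),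
      max (max ‖z - x‖ ‖z - y‖) ‖z - y'‖ := le_ciInf hbound
  have : d / 2 < d^2 / (2*h) := by
    rw [div_lt_div_iff₀ (by norm_num) (by linarith)]
    nlinarith
  linarith
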